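/- For all α, β, γ > 0, the kernel of the 4×4 matrix Q(α,β,γ) equals the one-dimensional span of the equilibrium vector (β+γ, β+γ, α, α), i.e. Ker Q(α,β,γ) = Span{𝓔} with 𝓔 = (β+γ, β+γ, α, α)/(2(α+β+γ)), and the range of Q(α,β,γ) equals {R ∈ ℝ⁴ : R₁ + R₂ + R₃ + R₄ = 0}. -/

import Mathlib

/-- For all `α, β, γ > 0`, the kernel of the 4×4 matrix `Q(α,β,γ)` of
NCS design 2 equals the span of the equilibrium vector
`𝓔 = (β+γ, β+γ, α, α)/(2(α+β+γ))`, and its range equals the hyperplane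
`{R ∈ ℝ⁴ : R₁ + R₂ + R₃ + R₄ = 0}`. -/
theorem ncs2_kernel_and_range (α β γ : ℝ) (hα : 0 < α) (hβ : 0 < β) (hγ : 0 < γ) :
    LinearMap.ker (Matrix.mulVecLin
      (!![-α, 0, γ, β;
          0, -α, β, γ;
          α, 0, -(β + γ), 0;
          0, α, 0, -(β + γ)] : Matrix (Fin 4) (Fin 4) ℝ))
      = Submodule.span ℝ {(2 * (α + β + γ))⁻¹ • ![β + γ, β + γ, α, α]} ∧
    (LinearMap.range (Matrix.mulVecLin
      (!![-α, 0, γ, β;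
          0, -α, β, γ;
          α, 0, -(β + γ), 0;
          0, α, 0, -(β + γ)] : Matrix (Fin 4) (Fin 4) ℝ)) : Set (Fin 4 → ℝ))
      = {R : Fin 4 → ℝ | R 0 + R 1 + R 2 + R 3 = 0} := by
  have hα' := hα.ne'
  have hβ' := hβ.ne'
  have hs : (2 * (α + β + γ)) ≠ 0 := by positivity
  constructor
  · ext x
    rw [LinearMap.mem_ker, Submodule.mem_span_singleton]
    constructor
    · intro h
      have h0 := congrFun h 0
      have h2 := congrFun h 2
      have h3 := congrFun h 3
      simp [Matrix.mulVecLin, Matrix.mulVec, dotProduct, Fin.sum_univ_four] at h0 h2 h3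
      have hx23 : x 2 = x 3 := by nlinarith [h0, h2, h3]
      refine ⟨2 * (α + β + γ) * x 2 / α, ?_⟩
      have e1 : α * x 0 = (β + γ) * x 2 := by linarith
      have e2 : α * x 1 = (β + γ) * x 2 := by rw [hx23] at *; linarith
      funext i
      fin_cases i <;>
        simp [Pi.smul_apply, smul_eq_mul] <;> field_simp <;>
        (first | ring1 | linear_combination e1 | linear_combination -e1 | linear_combination e2 | linear_combination -e2 | linear_combination hx23 | linear_combination -hx23 | linear_combination (2*(α+β+γ))*e1 | linear_combination (-(2*(α+β+γ)))*e1 | linear_combination (2*(α+β+γ))*e2 | linear_combination (-(2*(α+β+γ)))*e2 | linear_combination (2*(α+β+γ))*hx23 | linear_combination (-(2*(α+β+γ)))*hx23)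
    · rintro ⟨c, rfl⟩
      funext i
      fin_cases i <;>
        simp [Matrix.mulVecLin, Matrix.mulVec, dotProduct, Fin.sum_univ_four] <;> ring
  · ext R
    simp only [SetLike.mem_coe, LinearMap.mem_range, Set.mem_setOf_eq]
    constructor
    · rintro ⟨x, rfl⟩
      simp [Matrix.mulVecLin, Matrix.mulVec, dotProduct, Fin.sum_univ_four]
      ring
    · intro hsum
      refine ⟨![R 2 / α, (β * R 3 + (β + γ) * (R 0 + R 2)) / (β * α), 0, (R 0 + R 2) / β], ?_⟩
      funext i
      fin_cases i <;>
        simp [Matrix.mulVecLin, Matrix.mulVec, dotProduct, Fin.sum_univ_four] <;>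
        field_simp <;>
        (first | ring1 | linear_combination (α*β^2)*hsum | linear_combination (-(α*β^2))*hsum | linear_combination (α*β)*hsum | linear_combination (-(α*β))*hsum | linear_combination β*hsum | linear_combination (-β)*hsum)
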